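/- Let K be a field and f : V → W a morphism of ℤ-indexed cochain complexes of K-vector spaces. Form the pullback P of the canonical projection σ_W : Cone(𝟙_W) → W⟦1⟧ along the shifted morphism f⟦1⟧ : V⟦1⟧ → W⟦1⟧ in the category of cochain complexes, and let c : Cone(𝟙_V) → P be the morphism induced by the functorial map Cone(𝟙_V) → Cone(𝟙_W) determined by f together with σ_V : Cone(𝟙_V) → V⟦1⟧ (these two morphisms agree after composition to W⟦1⟧). If f is degreewise surjective, then c is degreewise surjective; if moreover f is a quasi-isomorphism, then c is also a quasi-isomorphism. -/

import Mathlib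

open CategoryTheory CategoryTheory.Limits CochainComplex

section Aux

open CochainComplex.mappingCone HomologicalComplex

lemma aux_quasiIso_iff_acyclic {C : Type*} [Category C] [Abelian C]
    {X Y : CochainComplex C ℤ} (φ : X ⟶ Y) :
    QuasiIso φ ↔ ∀ n : ℤ, (mappingCone φ).ExactAt n := by
  rw [← HomotopyCategory.quotient_obj_mem_subcategoryAcyclic_iff_exactAt,
    ← HomologicalComplex.mem_quasiIso_iff,
    ← HomotopyCategory.quotient_map_mem_quasiIso_iff φ,
    HomotopyCategory.quasiIso_eq_subcategoryAcyclic_W]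
  exact ObjectProperty.trW_iff_of_distinguished _ _
    (HomotopyCategory.mappingCone_triangleh_distinguished φ)

lemma aux_quasiIso_of_acyclic {C : Type*} [Category C] [Abelian C]
    {X Y : CochainComplex C ℤ} (φ : X ⟶ Y)
    (hX : ∀ n : ℤ, X.ExactAt n) (hY : ∀ n : ℤ, Y.ExactAt n) : QuasiIso φ := by
  rw [quasiIso_iff]
  intro n
  rw [quasiIsoAt_iff_isIso_homologyMap]
  have h1 := (X.exactAt_iff_isZero_homology n).1 (hX n)
  have h2 := (Y.exactAt_iff_isZero_homology n).1 (hY n)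
  exact ⟨0, h1.eq_of_src _ _, h2.eq_of_src _ _⟩

variable {K : Type} [Field K]

lemma aux_pullback_ext_modcat {X₁ X₂ S : ModuleCat K} (f₁ : X₁ ⟶ S) (f₂ : X₂ ⟶ S)
    (a b : ↑(pullback f₁ f₂))
    (h₁ : pullback.fst f₁ f₂ a = pullback.fst f₁ f₂ b)
    (h₂ : pullback.snd f₁ f₂ a = pullback.snd f₁ f₂ b) : a = b := by
  obtain ⟨x₁, x₂, hx, rfl⟩ := Limits.Concrete.pullbackMk_surjective f₁ f₂ a
  obtain ⟨y₁, y₂, hy, rfl⟩ := Limits.Concrete.pullbackMk_surjective f₁ f₂ b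
  have e₁ : x₁ = y₁ := (Limits.Concrete.pullbackMk_fst f₁ f₂ x₁ x₂ hx).symm.trans
    (h₁.trans (Limits.Concrete.pullbackMk_fst f₁ f₂ y₁ y₂ hy))
  have e₂ : x₂ = y₂ := (Limits.Concrete.pullbackMk_snd f₁ f₂ x₁ x₂ hx).symm.trans
    (h₂.trans (Limits.Concrete.pullbackMk_snd f₁ f₂ y₁ y₂ hy))
  subst e₁ e₂
  rfl

lemma aux_pullback_elem_ext {X₁ X₂ S : CochainComplex (ModuleCat K) ℤ}
    (f₁ : X₁ ⟶ S) (f₂ : X₂ ⟶ S) (n : ℤ)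
    (a b : ((pullback f₁ f₂) : CochainComplex (ModuleCat K) ℤ).X n)
    (h₁ : (pullback.fst f₁ f₂).f n a = (pullback.fst f₁ f₂).f n b)
    (h₂ : (pullback.snd f₁ f₂).f n a = (pullback.snd f₁ f₂).f n b) : a = b := by
  let F := HomologicalComplex.eval (ModuleCat K) (ComplexShape.up ℤ) n
  let ρ := PreservesPullback.iso F f₁ f₂
  have hinj : Function.Injective ρ.hom := by
    rw [← ModuleCat.mono_iff_injective]
    infer_instance
  apply hinj
  apply aux_pullback_ext_modcat
  · have ea : (pullback.fst (F.map f₁) (F.map f₂)) (ρ.hom a) = (F.map (pullback.fst f₁ f₂)) a :=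
      ConcreteCategory.congr_hom (PreservesPullback.iso_hom_fst F f₁ f₂) a
    have eb : (pullback.fst (F.map f₁) (F.map f₂)) (ρ.hom b) = (F.map (pullback.fst f₁ f₂)) b :=
      ConcreteCategory.congr_hom (PreservesPullback.iso_hom_fst F f₁ f₂) b
    rw [ea, eb]
    exact h₁
  · have ea : (pullback.snd (F.map f₁) (F.map f₂)) (ρ.hom a) = (F.map (pullback.snd f₁ f₂)) a :=
      ConcreteCategory.congr_hom (PreservesPullback.iso_hom_snd F f₁ f₂) a
    have eb : (pullback.snd (F.map f₁) (F.map f₂)) (ρ.hom b) = (F.map (pullback.snd f₁ f₂)) b :=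
      ConcreteCategory.congr_hom (PreservesPullback.iso_hom_snd F f₁ f₂) b
    rw [ea, eb]
    exact h₂

variable {X Y X' Y' : CochainComplex (ModuleCat K) ℤ}

lemma aux_cone_decomp (φ : X ⟶ Y) (n : ℤ) (z : (mappingCone φ).X n) :
    ∃ (a : X.X (n+1)) (b : Y.X n),
      z = (inl φ).v (n+1) n (by omega) a + (inr φ).f n b := by
  refine ⟨(fst φ).1.v n (n+1) rfl z, (snd φ).v n n (add_zero n) z, ?_⟩
  have h := ConcreteCategory.congr_hom (id_X φ n (n+1) rfl) z
  simpa using h.symm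

lemma aux_snd_inl (φ : X ⟶ Y) (n : ℤ) (a : X.X (n+1)) :
    (snd φ).v n n (add_zero n) ((inl φ).v (n+1) n (by omega) a) = 0 :=
  ConcreteCategory.congr_hom (inl_v_snd_v φ (n+1) n (by omega)) a

lemma aux_snd_inr (φ : X ⟶ Y) (n : ℤ) (y : Y.X n) :
    (snd φ).v n n (add_zero n) ((inr φ).f n y) = y :=
  ConcreteCategory.congr_hom (inr_f_snd_v φ n) y

lemma aux_mor3_inl (φ : X ⟶ Y) (n : ℤ) (a : X.X (n+1)) :
    (triangle φ).mor₃.f n ((inl φ).v (n+1) n (by omega) a) = -a :=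
  ConcreteCategory.congr_hom (inl_v_triangle_mor₃_f φ (n+1) n (by omega)) a

lemma aux_mor3_inr (φ : X ⟶ Y) (n : ℤ) (y : Y.X n) :
    (triangle φ).mor₃.f n ((inr φ).f n y) = 0 :=
  ConcreteCategory.congr_hom (inr_f_triangle_mor₃_f φ n) y

lemma aux_map_inl (φ : X ⟶ Y) (φ' : X' ⟶ Y') (a : X ⟶ X') (b : Y ⟶ Y')
    (comm : φ ≫ b = a ≫ φ') (n : ℤ) (x : X.X (n+1)) :
    (mappingCone.map φ φ' a b comm).f n ((inl φ).v (n+1) n (by omega) x) =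
      (inl φ').v (n+1) n (by omega) (a.f (n+1) x) := by
  have e : (inl φ).v (n+1) n (by omega) ≫ (mappingCone.map φ φ' a b comm).f n =
      a.f (n+1) ≫ (inl φ').v (n+1) n (by omega) := by
    simp [mappingCone.map]
  exact ConcreteCategory.congr_hom e x

lemma aux_map_inr (φ : X ⟶ Y) (φ' : X' ⟶ Y') (a : X ⟶ X') (b : Y ⟶ Y')
    (comm : φ ≫ b = a ≫ φ') (n : ℤ) (y : Y.X n) :
    (mappingCone.map φ φ' a b comm).f n ((inr φ).f n y) =
      (inr φ').f n (b.f n y) := by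
  have e : (inr φ).f n ≫ (mappingCone.map φ φ' a b comm).f n =
      b.f n ≫ (inr φ').f n := by
    simp [mappingCone.map]
  exact ConcreteCategory.congr_hom e y

/-- The key surjectivity argument, abstracted over the "pullback-like" target. -/
lemma aux_surj {V W Y P : CochainComplex (ModuleCat K) ℤ} (f : V ⟶ W) (φ : V ⟶ Y) (b : Y ⟶ W)
    (comm : φ ≫ b = f ≫ 𝟙 W)
    (π₁ : P ⟶ mappingCone (𝟙 W))
    (π₂ : P ⟶ (CategoryTheory.shiftFunctor (CochainComplex (ModuleCat K) ℤ) (1 : ℤ)).obj V)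
    (hπ : ∀ (n : ℤ) (p : P.X n),
      (triangle (𝟙 W)).mor₃.f n (π₁.f n p) = f.f (n+1) (π₂.f n p))
    (hjoint : ∀ (n : ℤ) (u u' : P.X n),
      π₁.f n u = π₁.f n u' → π₂.f n u = π₂.f n u' → u = u')
    (t : mappingCone φ ⟶ P)
    (ht₁ : t ≫ π₁ = mappingCone.map φ (𝟙 W) f b comm)
    (ht₂ : t ≫ π₂ = (triangle φ).mor₃)
    (hb : ∀ n : ℤ, Function.Surjective (b.f n)) (n : ℤ) :
    Function.Surjective (t.f n) := by
  intro p
  obtain ⟨x₁, x₀, hx⟩ := aux_cone_decomp (𝟙 W) n (π₁.f n p)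
  obtain ⟨u, hu⟩ := hb n x₀
  have hfv : f.f (n+1) (π₂.f n p) = -x₁ := by
    rw [← hπ n p, hx]
    erw [map_add]
    erw [aux_mor3_inl, aux_mor3_inr, add_zero]
  refine ⟨(inl φ).v (n+1) n (by omega) (-(π₂.f n p)) + (inr φ).f n u, hjoint n _ _ ?_ ?_⟩
  · have e₁ : π₁.f n (t.f n ((inl φ).v (n+1) n (by omega) (-(π₂.f n p)) + (inr φ).f n u)) =
        (mappingCone.map φ (𝟙 W) f b comm).f n
          ((inl φ).v (n+1) n (by omega) (-(π₂.f n p)) + (inr φ).f n u) :=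
      ConcreteCategory.congr_hom (congrArg (fun (t : _ ⟶ _) => HomologicalComplex.Hom.f t n) ht₁) _
    erw [e₁, map_add, aux_map_inl, aux_map_inr, map_neg, hfv, neg_neg, hu, hx]
  · have e₂ : π₂.f n (t.f n ((inl φ).v (n+1) n (by omega) (-(π₂.f n p)) + (inr φ).f n u)) =
        (triangle φ).mor₃.f n
          ((inl φ).v (n+1) n (by omega) (-(π₂.f n p)) + (inr φ).f n u) :=
      ConcreteCategory.congr_hom (congrArg (fun (t : _ ⟶ _) => HomologicalComplex.Hom.f t n) ht₂) _
    erw [e₂, map_add, aux_mor3_inl, aux_mor3_inr, add_zero, neg_neg]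

/-- The key injectivity argument. -/
lemma aux_inj {V W Y P : CochainComplex (ModuleCat K) ℤ} (f : V ⟶ W) (φ : V ⟶ Y) (b : Y ⟶ W)
    (comm : φ ≫ b = f ≫ 𝟙 W)
    (π₁ : P ⟶ mappingCone (𝟙 W))
    (π₂ : P ⟶ (CategoryTheory.shiftFunctor (CochainComplex (ModuleCat K) ℤ) (1 : ℤ)).obj V)
    (t : mappingCone φ ⟶ P)
    (ht₁ : t ≫ π₁ = mappingCone.map φ (𝟙 W) f b comm)
    (ht₂ : t ≫ π₂ = (triangle φ).mor₃)
    (hbinj : ∀ n : ℤ, Function.Injective (b.f n)) (n : ℤ) :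
    Function.Injective (t.f n) := by
  intro z z' h
  obtain ⟨z₁, z₀, rfl⟩ := aux_cone_decomp φ n z
  obtain ⟨z₁', z₀', rfl⟩ := aux_cone_decomp φ n z'
  have e₁ : ∀ (w₁ : V.X (n+1)) (w₀ : Y.X n),
      π₁.f n (t.f n ((inl φ).v (n+1) n (by omega) w₁ + (inr φ).f n w₀)) =
        (inl (𝟙 W)).v (n+1) n (by omega) (f.f (n+1) w₁) + (inr (𝟙 W)).f n (b.f n w₀) := by
    intro w₁ w₀
    have e : π₁.f n (t.f n ((inl φ).v (n+1) n (by omega) w₁ + (inr φ).f n w₀)) =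
        (mappingCone.map φ (𝟙 W) f b comm).f n
          ((inl φ).v (n+1) n (by omega) w₁ + (inr φ).f n w₀) :=
      ConcreteCategory.congr_hom (congrArg (fun (t : _ ⟶ _) => HomologicalComplex.Hom.f t n) ht₁) _
    rw [e, map_add, aux_map_inl, aux_map_inr]
  have e₂ : ∀ (w₁ : V.X (n+1)) (w₀ : Y.X n),
      π₂.f n (t.f n ((inl φ).v (n+1) n (by omega) w₁ + (inr φ).f n w₀)) = -w₁ := by
    intro w₁ w₀
    have e : π₂.f n (t.f n ((inl φ).v (n+1) n (by omega) w₁ + (inr φ).f n w₀)) =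
        (triangle φ).mor₃.f n ((inl φ).v (n+1) n (by omega) w₁ + (inr φ).f n w₀) :=
      ConcreteCategory.congr_hom (congrArg (fun (t : _ ⟶ _) => HomologicalComplex.Hom.f t n) ht₂) _
    erw [e, map_add, aux_mor3_inl, aux_mor3_inr, add_zero]
  have h₂ := congrArg (π₂.f n) h
  rw [e₂, e₂] at h₂
  have hz₁ : z₁ = z₁' := neg_injective h₂
  have h₁ := congrArg ((snd (𝟙 W)).v n n (add_zero n) ∘ (π₁.f n)) h
  simp only [Function.comp_apply] at h₁
  rw [e₁, e₁, map_add, map_add, aux_snd_inl, aux_snd_inr, aux_snd_inl, aux_snd_inr,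
    zero_add, zero_add] at h₁
  have hz₀ : z₀ = z₀' := hbinj n h₁
  rw [hz₁, hz₀]

end Aux

/-- For a degreewise surjective morphism `f : V ⟶ W` of cochain complexes of `K`-vector spaces,
the canonical morphism `c` from `Cone(𝟙_V)` to the pullback of the projection
`σ_W : Cone(𝟙_W) → W⟦1⟧` along `f⟦1⟧ : V⟦1⟧ → W⟦1⟧` — induced by the functorial map
`Cone(𝟙_V) → Cone(𝟙_W)` and `σ_V` — is degreewise surjective; and if moreover `f` is a
quasi-isomorphism then so is `c`. -/
theorem cone_to_pullback_surjective_and_quasiIso (K : Type) [Field K]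
    (V W : CochainComplex (ModuleCat K) ℤ) (f : V ⟶ W)
    (hf : ∀ n : ℤ, Function.Surjective (f.f n))
    (c : mappingCone (𝟙 V) ⟶
      pullback (mappingCone.triangle (𝟙 W)).mor₃
        ((CategoryTheory.shiftFunctor (CochainComplex (ModuleCat K) ℤ) (1 : ℤ)).map f))
    (hc₁ : c ≫ pullback.fst _ _ =
      mappingCone.map (𝟙 V) (𝟙 W) f f (by rw [CategoryTheory.Category.id_comp,
        CategoryTheory.Category.comp_id]))
    (hc₂ : c ≫ pullback.snd _ _ = (mappingCone.triangle (𝟙 V)).mor₃) :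
    (∀ n : ℤ, Function.Surjective (c.f n)) ∧ (QuasiIso f → QuasiIso c) := by
  have hπ : ∀ (n : ℤ)
      (p : (pullback (mappingCone.triangle (𝟙 W)).mor₃
        ((CategoryTheory.shiftFunctor (CochainComplex (ModuleCat K) ℤ) (1 : ℤ)).map f) :
          CochainComplex (ModuleCat K) ℤ).X n),
      (mappingCone.triangle (𝟙 W)).mor₃.f n
          ((pullback.fst (mappingCone.triangle (𝟙 W)).mor₃
            ((CategoryTheory.shiftFunctor (CochainComplex (ModuleCat K) ℤ) (1 : ℤ)).map f)).f n p) =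
        f.f (n+1)
          ((pullback.snd (mappingCone.triangle (𝟙 W)).mor₃
            ((CategoryTheory.shiftFunctor (CochainComplex (ModuleCat K) ℤ) (1 : ℤ)).map f)).f n p) :=
    fun n p => ConcreteCategory.congr_hom
      (congrArg (fun (t : _ ⟶ _) => HomologicalComplex.Hom.f t n)
        (pullback.condition (f := (mappingCone.triangle (𝟙 W)).mor₃)
          (g := (CategoryTheory.shiftFunctor (CochainComplex (ModuleCat K) ℤ) (1 : ℤ)).map f))) p
  constructor
  · -- degreewise surjectivity of c
    exact aux_surj f (𝟙 V) f (by simp) (pullback.fst _ _) (pullback.snd _ _) hπ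
      (aux_pullback_elem_ext _ _) c hc₁ hc₂ hf
  · -- quasi-isomorphism
    intro hqf
    have comm' : f ≫ 𝟙 W = f ≫ 𝟙 W := rfl
    have hψcomm : mappingCone.map f (𝟙 W) f (𝟙 W) comm' ≫ (mappingCone.triangle (𝟙 W)).mor₃ =
        (mappingCone.triangle f).mor₃ ≫
          (CategoryTheory.shiftFunctor (CochainComplex (ModuleCat K) ℤ) (1 : ℤ)).map f :=
      ((mappingCone.triangleMap f (𝟙 W) f (𝟙 W) comm').comm₃).symm
    set ψ : mappingCone f ⟶
        pullback (mappingCone.triangle (𝟙 W)).mor₃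
          ((CategoryTheory.shiftFunctor (CochainComplex (ModuleCat K) ℤ) (1 : ℤ)).map f) :=
      pullback.lift (mappingCone.map f (𝟙 W) f (𝟙 W) comm')
        (mappingCone.triangle f).mor₃ hψcomm with hψ
    haveI : ∀ n : ℤ, IsIso (ψ.f n) := by
      intro n
      rw [ConcreteCategory.isIso_iff_bijective]
      constructor
      · exact aux_inj f f (𝟙 W) comm' (pullback.fst _ _) (pullback.snd _ _) ψ
          (pullback.lift_fst _ _ _) (pullback.lift_snd _ _ _)
          (fun m u u' h => by simpa using h) n
      · exact aux_surj f f (𝟙 W) comm' (pullback.fst _ _) (pullback.snd _ _) hπ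
          (aux_pullback_elem_ext _ _) ψ
          (pullback.lift_fst _ _ _) (pullback.lift_snd _ _ _)
          (fun m => fun y => ⟨y, by simp⟩) n
    haveI : IsIso ψ := HomologicalComplex.Hom.isIso_of_components ψ
    have hconeV : ∀ n : ℤ, (mappingCone (𝟙 V)).ExactAt n :=
      (aux_quasiIso_iff_acyclic (𝟙 V)).1 inferInstance
    have hconef : ∀ n : ℤ, (mappingCone f).ExactAt n :=
      (aux_quasiIso_iff_acyclic f).1 hqf
    have hP : ∀ n : ℤ,
        (pullback (mappingCone.triangle (𝟙 W)).mor₃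
          ((CategoryTheory.shiftFunctor (CochainComplex (ModuleCat K) ℤ) (1 : ℤ)).map f) :
            CochainComplex (ModuleCat K) ℤ).ExactAt n := by
      intro n
      rw [HomologicalComplex.exactAt_iff_isZero_homology]
      exact Limits.IsZero.of_iso
        ((HomologicalComplex.exactAt_iff_isZero_homology _ _).1 (hconef n))
        ((HomologicalComplex.homologyFunctor (ModuleCat K) (ComplexShape.up ℤ) n).mapIso
          (asIso ψ)).symm
    exact aux_quasiIso_of_acyclic c hconeV hP
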